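/- In PG(2,q), every midland wind rose is the union of three distinct midland lines; every coast wind rose is the union of a coast line and a midland line; and every cardinal wind rose is the union of two distinct coast lines. -/

import Mathlib

open Projectivization Classical

variable (F : Type*) [Field F] [Fintype F] [DecidableEq F]

noncomputable def cardPt (i : Fin 3) : Projectivization F (Fin 3 → F) :=
  Projectivization.mk F (Pi.single i 1) (by intro h; simpa using congrFun h i)

noncomputable def pline (u v : Projectivization F (Fin 3 → F)) :
    Set (Projectivization F (Fin 3 → F)) :=
  if u = v then {u}
  else {p | p.submodule ≤ u.submodule ⊔ v.submodule}

noncomputable def windRose (p : Projectivization F (Fin 3 → F)) :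
    Set (Projectivization F (Fin 3 → F)) :=
  pline F p (cardPt F 0) ∪ pline F p (cardPt F 1) ∪ pline F p (cardPt F 2)

noncomputable def nnz (p : Projectivization F (Fin 3 → F)) : ℕ :=
  (Finset.univ.filter fun i : Fin 3 => p.rep i ≠ 0).card

def IsCardinal (p : Projectivization F (Fin 3 → F)) : Prop := nnz F p = 1
def IsCoast (p : Projectivization F (Fin 3 → F)) : Prop := nnz F p = 2
def IsMidland (p : Projectivization F (Fin 3 → F)) : Prop := nnz F p = 3

def extBall (v : Fin 3 → F) : Set (Fin 3 → F) :=
  {w | ∃ u ∈ Submodule.span F ({v} : Set (Fin 3 → F)), hammingDist w u ≤ 1}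

def IsLine (F : Type*) [Field F] [Fintype F] [DecidableEq F]
    (L : Set (Projectivization F (Fin 3 → F))) : Prop :=
  ∃ u v : Projectivization F (Fin 3 → F), u ≠ v ∧ L = pline F u v

def IsMidlandLine (F : Type*) [Field F] [Fintype F] [DecidableEq F]
    (L : Set (Projectivization F (Fin 3 → F))) : Prop :=
  IsLine F L ∧ ∃ p ∈ L, IsMidland F p

def IsCoastLine (F : Type*) [Field F] [Fintype F] [DecidableEq F]
    (L : Set (Projectivization F (Fin 3 → F))) : Prop :=
  IsLine F L ∧ ¬ ∃ p ∈ L, IsMidland F p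

section Aux

variable {F}

private lemma single_nz (i : Fin 3) : (Pi.single i 1 : Fin 3 → F) ≠ 0 := by
  intro h; simpa using congrFun h i

private lemma cardPt_eq_mk (i : Fin 3) :
    cardPt F i = Projectivization.mk F (Pi.single i 1) (single_nz i) := rfl

private lemma mem_pline_mk {a b : Fin 3 → F} {ha : a ≠ 0} {hb : b ≠ 0}
    (hab : Projectivization.mk F a ha ≠ Projectivization.mk F b hb)
    (q : Projectivization F (Fin 3 → F)) :
    q ∈ pline F (Projectivization.mk F a ha) (Projectivization.mk F b hb) ↔
      q.rep ∈ Submodule.span F {a, b} := by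
  rw [pline, if_neg hab]
  show q.submodule ≤ _ ↔ _
  rw [Projectivization.submodule_eq, Projectivization.submodule_mk,
    Projectivization.submodule_mk, ← Submodule.span_insert,
    Submodule.span_singleton_le_iff_mem]

private lemma rep_mk_smul {w : Fin 3 → F} (hw : w ≠ 0) :
    ∃ a : Fˣ, (Projectivization.mk F w hw).rep = a • w := by
  obtain ⟨a, ha⟩ := Projectivization.exists_smul_eq_mk_rep F w hw
  exact ⟨a, ha.symm⟩

private lemma nnz_mk {w : Fin 3 → F} (hw : w ≠ 0) :
    nnz F (Projectivization.mk F w hw) =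
      (Finset.univ.filter fun i : Fin 3 => w i ≠ 0).card := by
  obtain ⟨a, ha⟩ := rep_mk_smul hw
  unfold nnz
  congr 1
  ext m
  simp [ha, Units.smul_def, Units.mul_right_eq_zero]

private lemma isMidland_iff (q : Projectivization F (Fin 3 → F)) :
    IsMidland F q ↔ ∀ m, q.rep m ≠ 0 := by
  constructor
  · intro h m
    have hu : (Finset.univ.filter fun i : Fin 3 => q.rep i ≠ 0) = Finset.univ :=
      Finset.eq_univ_of_card _ (by rw [Fintype.card_fin]; exact h)
    have := Finset.eq_univ_iff_forall.mp hu m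
    exact (Finset.mem_filter.mp this).2
  · intro h
    show (Finset.univ.filter fun i : Fin 3 => q.rep i ≠ 0).card = 3
    rw [Finset.filter_true_of_mem fun m _ => h m]
    simp

private lemma isMidland_mk_iff {w : Fin 3 → F} (hw : w ≠ 0) :
    IsMidland F (Projectivization.mk F w hw) ↔ ∀ m, w m ≠ 0 := by
  rw [isMidland_iff]
  obtain ⟨a, ha⟩ := rep_mk_smul hw
  refine forall_congr' fun m => ?_
  rw [ha]
  simp [Units.smul_def, Units.mul_right_eq_zero]

private lemma ne_cardPt {v : Fin 3 → F} (hv : v ≠ 0) {i j : Fin 3} (hij : j ≠ i)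
    (hj : v j ≠ 0) : Projectivization.mk F v hv ≠ cardPt F i := by
  rw [cardPt_eq_mk, Ne, Projectivization.mk_eq_mk_iff']
  rintro ⟨a, ha⟩
  apply hj
  have := congrFun ha j
  simpa [Pi.single_apply, hij] using this.symm

private lemma cardPt_ne {i j : Fin 3} (hij : i ≠ j) : cardPt F i ≠ cardPt F j := by
  rw [cardPt_eq_mk i]
  exact ne_cardPt (single_nz i) hij (by simp)

private lemma eval_zero_of_mem_span_pair {a b x : Fin 3 → F} {k : Fin 3}
    (hx : x ∈ Submodule.span F {a, b}) (ha : a k = 0) (hb : b k = 0) : x k = 0 := by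
  obtain ⟨m, n, h⟩ := Submodule.mem_span_pair.mp hx
  rw [← h]
  simp [ha, hb]

private lemma single_not_mem_span {v : Fin 3 → F} {i j k : Fin 3} (hij : i ≠ j)
    (hik : i ≠ k) (hjk : j ≠ k) (hk : v k ≠ 0) :
    (Pi.single i 1 : Fin 3 → F) ∉ Submodule.span F {v, Pi.single j 1} := by
  intro h
  obtain ⟨m, n, hmn⟩ := Submodule.mem_span_pair.mp h
  have h1 := congrFun hmn k
  have h2 := congrFun hmn i
  simp only [Pi.add_apply, Pi.smul_apply, smul_eq_mul, Pi.single_apply,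
    if_neg (Ne.symm hjk), if_neg (Ne.symm hik), if_neg hij] at h1 h2
  simp only [if_true, ite_true, eq_self_iff_true, mul_zero, add_zero,
    mul_one] at h1 h2
  have hm : m = 0 := by
    rcases mul_eq_zero.mp h1 with h | h
    · exact h
    · exact absurd h hk
  rw [hm, zero_mul] at h2
  exact one_ne_zero h2.symm

private lemma cardPt_not_mem_pline {v : Fin 3 → F} {hv : v ≠ 0} {a b c : Fin 3}
    (hab : a ≠ b) (hac : a ≠ c) (hbc : b ≠ c) (hvc : v c ≠ 0)
    (hpb : Projectivization.mk F v hv ≠ cardPt F b) :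
    cardPt F a ∉ pline F (Projectivization.mk F v hv) (cardPt F b) := by
  rw [cardPt_eq_mk b] at hpb ⊢
  intro h
  have hm := (mem_pline_mk hpb _).mp h
  obtain ⟨u, hu⟩ := rep_mk_smul (single_nz (F := F) a)
  have hrep : (cardPt F a).rep = (u : F) • (Pi.single a 1 : Fin 3 → F) := hu
  rw [hrep] at hm
  have : (Pi.single a 1 : Fin 3 → F) ∈ Submodule.span F {v, Pi.single b 1} := by
    have h2 := Submodule.smul_mem _ ((u⁻¹ : Fˣ) : F) hm
    simpa [smul_smul] using h2
  exact single_not_mem_span hab hac hbc hvc this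

private lemma left_mem_pline (u v : Projectivization F (Fin 3 → F)) :
    u ∈ pline F u v := by
  rw [pline]
  split
  · exact rfl
  · show u.submodule ≤ u.submodule ⊔ v.submodule
    exact le_sup_left

private lemma right_mem_pline (u v : Projectivization F (Fin 3 → F)) :
    v ∈ pline F u v := by
  rw [pline]
  split
  case isTrue h => exact h ▸ rfl
  case isFalse =>
    show v.submodule ≤ u.submodule ⊔ v.submodule
    exact le_sup_right

private lemma pline_subset_windRose (p : Projectivization F (Fin 3 → F)) (m : Fin 3) :
    pline F p (cardPt F m) ⊆ windRose F p := by
  fin_cases m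
  · exact fun q hq => Or.inl (Or.inl hq)
  · exact fun q hq => Or.inl (Or.inr hq)
  · exact fun q hq => Or.inr hq

private lemma windRose_eq {p : Projectivization F (Fin 3 → F)}
    {A B : Set (Projectivization F (Fin 3 → F))}
    (h : ∀ m : Fin 3, pline F p (cardPt F m) ⊆ A ∪ B)
    (hA : A ⊆ windRose F p) (hB : B ⊆ windRose F p) :
    windRose F p = A ∪ B :=
  subset_antisymm
    (Set.union_subset (Set.union_subset (h 0) (h 1)) (h 2))
    (Set.union_subset hA hB)

private lemma tri {i j k : Fin 3} (hij : i ≠ j) (hik : i ≠ k) (hjk : j ≠ k)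
    (m : Fin 3) : m = i ∨ m = j ∨ m = k := by
  have : ∀ i j k m : Fin 3, i ≠ j → i ≠ k → j ≠ k → (m = i ∨ m = j ∨ m = k) := by decide
  exact this i j k m hij hik hjk

private lemma pline_eq_pline {a b c d : Fin 3 → F} {ha : a ≠ 0} {hb : b ≠ 0}
    {hc : c ≠ 0} {hd : d ≠ 0}
    (hab : Projectivization.mk F a ha ≠ Projectivization.mk F b hb)
    (hcd : Projectivization.mk F c hc ≠ Projectivization.mk F d hd)
    (h : Submodule.span F {a, b} = Submodule.span F {c, d}) :
    pline F (Projectivization.mk F a ha) (Projectivization.mk F b hb) =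
      pline F (Projectivization.mk F c hc) (Projectivization.mk F d hd) := by
  ext q
  rw [mem_pline_mk hab, mem_pline_mk hcd, h]

private lemma span_coast {v : Fin 3 → F} {i j k : Fin 3} (hij : i ≠ j) (hik : i ≠ k)
    (hjk : j ≠ k) (hk : v k = 0) (hj : v j ≠ 0) :
    Submodule.span F {v, (Pi.single i 1 : Fin 3 → F)} =
      Submodule.span F {(Pi.single i 1 : Fin 3 → F), Pi.single j 1} := by
  apply le_antisymm
  · rw [Submodule.span_le, Set.insert_subset_iff, Set.singleton_subset_iff]
    constructor
    · apply Submodule.mem_span_pair.mpr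
      refine ⟨v i, v j, funext fun m => ?_⟩
      rcases tri hij hik hjk m with rfl | rfl | rfl
      · simp [Pi.single_apply, hij]
      · simp [Pi.single_apply, Ne.symm hij]
      · simp [Pi.single_apply, Ne.symm hik, Ne.symm hjk, hk]
    · exact Submodule.subset_span (Set.mem_insert _ _)
  · rw [Submodule.span_le, Set.insert_subset_iff, Set.singleton_subset_iff]
    constructor
    · exact Submodule.subset_span (Set.mem_insert_of_mem _ rfl)
    · apply Submodule.mem_span_pair.mpr
      refine ⟨(v j)⁻¹, -(v i) * (v j)⁻¹, funext fun m => ?_⟩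
      rcases tri hij hik hjk m with h | h | h
      · rw [h]
        have e1 : (Pi.single i 1 : Fin 3 → F) i = 1 := Pi.single_eq_same i 1
        have e2 : (Pi.single j 1 : Fin 3 → F) i = 0 :=
          Pi.single_eq_of_ne hij 1
        simp only [Pi.add_apply, Pi.smul_apply, smul_eq_mul, e1, e2, mul_one]
        ring
      · rw [h]
        have e1 : (Pi.single i 1 : Fin 3 → F) j = 0 :=
          Pi.single_eq_of_ne (Ne.symm hij) 1
        have e2 : (Pi.single j 1 : Fin 3 → F) j = 1 := Pi.single_eq_same j 1
        simp only [Pi.add_apply, Pi.smul_apply, smul_eq_mul, e1, e2, mul_zero,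
          add_zero]
        exact inv_mul_cancel₀ hj
      · rw [h]
        simp [Pi.single_apply, Ne.symm hik, Ne.symm hjk, hk]

private lemma isCoastLine_card {i j k : Fin 3} (hij : i ≠ j) (hik : i ≠ k)
    (hjk : j ≠ k) : IsCoastLine F (pline F (cardPt F i) (cardPt F j)) := by
  refine ⟨⟨_, _, cardPt_ne hij, rfl⟩, ?_⟩
  rintro ⟨q, hq, hmid⟩
  rw [isMidland_iff] at hmid
  rw [cardPt_eq_mk i, cardPt_eq_mk j] at hq
  refine hmid k (eval_zero_of_mem_span_pair
    ((mem_pline_mk (cardPt_ne hij) q).mp hq) ?_ ?_)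
  · exact Pi.single_eq_of_ne (Ne.symm hik) 1
  · exact Pi.single_eq_of_ne (Ne.symm hjk) 1

end Aux

theorem stmt_15 (F : Type*) [Field F] [Fintype F] [DecidableEq F]
    (p : Projectivization F (Fin 3 → F)) :
    (IsMidland F p → ∃ L₁ L₂ L₃, IsMidlandLine F L₁ ∧ IsMidlandLine F L₂ ∧
      IsMidlandLine F L₃ ∧ L₁ ≠ L₂ ∧ L₁ ≠ L₃ ∧ L₂ ≠ L₃ ∧
      windRose F p = L₁ ∪ L₂ ∪ L₃) ∧
    (IsCoast F p → ∃ C M, IsCoastLine F C ∧ IsMidlandLine F M ∧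
      windRose F p = C ∪ M) ∧
    (IsCardinal F p → ∃ C₁ C₂, IsCoastLine F C₁ ∧ IsCoastLine F C₂ ∧ C₁ ≠ C₂ ∧
      windRose F p = C₁ ∪ C₂) := by
  induction p using Projectivization.ind with
  | h v hv =>
  refine ⟨?_, ?_, ?_⟩
  · -- midland case
    intro hmid
    have hall : ∀ m, v m ≠ 0 := (isMidland_mk_iff hv).mp hmid
    have hsucc : ∀ m : Fin 3, m + 1 ≠ m := by decide
    have hne : ∀ m : Fin 3, Projectivization.mk F v hv ≠ cardPt F m :=
      fun m => ne_cardPt hv (hsucc m) (hall (m + 1))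
    have hLmid : ∀ m : Fin 3,
        IsMidlandLine F (pline F (Projectivization.mk F v hv) (cardPt F m)) :=
      fun m => ⟨⟨_, _, hne m, rfl⟩, ⟨_, left_mem_pline _ _, hmid⟩⟩
    have hdist : ∀ a b c : Fin 3, a ≠ b → a ≠ c → b ≠ c →
        pline F (Projectivization.mk F v hv) (cardPt F a) ≠
          pline F (Projectivization.mk F v hv) (cardPt F b) := by
      intro a b c hab hac hbc h
      refine cardPt_not_mem_pline hab hac hbc (hall c) (hne b) ?_
      rw [← h]
      exact right_mem_pline _ _
    refine ⟨_, _, _, hLmid 0, hLmid 1, hLmid 2, ?_, ?_, ?_, rfl⟩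
    · exact hdist 0 1 2 (by decide) (by decide) (by decide)
    · exact hdist 0 2 1 (by decide) (by decide) (by decide)
    · exact hdist 1 2 0 (by decide) (by decide) (by decide)
  · -- coast case
    intro hcoast
    have hcard : (Finset.univ.filter fun i : Fin 3 => v i ≠ 0).card = 2 := by
      rw [← nnz_mk hv]; exact hcoast
    have hz : (Finset.univ.filter fun i : Fin 3 => v i = 0).card = 1 := by
      have htot := Finset.card_filter_add_card_filter_not
        (s := (Finset.univ : Finset (Fin 3))) (fun i : Fin 3 => v i ≠ 0)
      have heq : (Finset.univ.filter fun i : Fin 3 => ¬ v i ≠ 0) =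
          (Finset.univ.filter fun i : Fin 3 => v i = 0) := by
        ext m; simp [not_not]
      rw [heq, hcard] at htot
      simp only [Finset.card_univ, Fintype.card_fin] at htot
      omega
    obtain ⟨k, hfk⟩ := Finset.card_eq_one.mp hz
    have hk0 : v k = 0 := by
      have hmem : k ∈ Finset.univ.filter fun i : Fin 3 => v i = 0 := by
        rw [hfk]; exact Finset.mem_singleton_self k
      exact (Finset.mem_filter.mp hmem).2
    have hnz : ∀ m, m ≠ k → v m ≠ 0 := by
      intro m hm h0
      have : m ∈ (Finset.univ.filter fun i : Fin 3 => v i = 0) :=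
        Finset.mem_filter.mpr ⟨Finset.mem_univ m, h0⟩
      rw [hfk] at this
      exact hm (Finset.mem_singleton.mp this)
    have h3 : ∀ k : Fin 3, ∃ i j : Fin 3, i ≠ j ∧ i ≠ k ∧ j ≠ k := by decide
    obtain ⟨i, j, hij, hik, hjk⟩ := h3 k
    have hvi : v i ≠ 0 := hnz i hik
    have hvj : v j ≠ 0 := hnz j hjk
    have hpci : Projectivization.mk F v hv ≠ cardPt F i := ne_cardPt hv hij.symm hvj
    have hpcj : Projectivization.mk F v hv ≠ cardPt F j := ne_cardPt hv hij hvi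
    have hpck : Projectivization.mk F v hv ≠ cardPt F k := ne_cardPt hv hik hvi
    set C := pline F (cardPt F i) (cardPt F j) with hC
    set M := pline F (Projectivization.mk F v hv) (cardPt F k) with hM
    have hCi : pline F (Projectivization.mk F v hv) (cardPt F i) = C := by
      rw [hC, cardPt_eq_mk i, cardPt_eq_mk j]
      exact pline_eq_pline hpci (cardPt_ne hij) (span_coast hij hik hjk hk0 hvj)
    have hCj : pline F (Projectivization.mk F v hv) (cardPt F j) = C := by
      rw [hC, cardPt_eq_mk i, cardPt_eq_mk j]
      refine pline_eq_pline hpcj (cardPt_ne hij) ?_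
      rw [span_coast hij.symm hjk hik hk0 hvi, Set.pair_comm]
    have hMmid : IsMidlandLine F M := by
      refine ⟨⟨_, _, hpck, rfl⟩, ?_⟩
      have hw : (v + Pi.single k 1 : Fin 3 → F) ≠ 0 := by
        intro h
        apply hvi
        have := congrFun h i
        simpa [Pi.single_eq_of_ne hik] using this
      refine ⟨Projectivization.mk F (v + Pi.single k 1) hw, ?_, ?_⟩
      · rw [hM, cardPt_eq_mk k, mem_pline_mk hpck]
        obtain ⟨a, ha⟩ := rep_mk_smul hw
        rw [ha]
        refine Submodule.smul_mem _ _ (Submodule.mem_span_pair.mpr ⟨1, 1, by simp⟩)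
      · rw [isMidland_mk_iff hw]
        intro m
        rcases tri hij hik hjk m with rfl | rfl | rfl
        · simpa [Pi.single_eq_of_ne hik] using hvi
        · simpa [Pi.single_eq_of_ne hjk] using hvj
        · simp [hk0]
    refine ⟨C, M, isCoastLine_card hij hik hjk, hMmid, ?_⟩
    apply windRose_eq
    · intro m
      rcases tri hij hik hjk m with rfl | rfl | rfl
      · rw [hCi]; exact Set.subset_union_left
      · rw [hCj]; exact Set.subset_union_left
      · rw [← hM]; exact Set.subset_union_right
    · rw [← hCi]; exact pline_subset_windRose _ i
    · rw [hM]; exact pline_subset_windRose _ k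
  · -- cardinal case
    intro hcardp
    have hcard : (Finset.univ.filter fun m : Fin 3 => v m ≠ 0).card = 1 := by
      rw [← nnz_mk hv]; exact hcardp
    obtain ⟨i, hfi⟩ := Finset.card_eq_one.mp hcard
    have hvi : v i ≠ 0 := by
      have hmem : i ∈ Finset.univ.filter fun m : Fin 3 => v m ≠ 0 := by
        rw [hfi]; exact Finset.mem_singleton_self i
      exact (Finset.mem_filter.mp hmem).2
    have hzero : ∀ m, m ≠ i → v m = 0 := by
      intro m hm
      by_contra h0
      have : m ∈ (Finset.univ.filter fun m : Fin 3 => v m ≠ 0) :=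
        Finset.mem_filter.mpr ⟨Finset.mem_univ m, h0⟩
      rw [hfi] at this
      exact hm (Finset.mem_singleton.mp this)
    have h3 : ∀ i : Fin 3, ∃ j k : Fin 3, j ≠ k ∧ j ≠ i ∧ k ≠ i := by decide
    obtain ⟨j, k, hjk, hji, hki⟩ := h3 i
    have hpi : Projectivization.mk F v hv = cardPt F i := by
      rw [cardPt_eq_mk i, Projectivization.mk_eq_mk_iff']
      refine ⟨v i, funext fun m => ?_⟩
      rcases eq_or_ne m i with rfl | hm
      · simp
      · simp [Pi.single_eq_of_ne hm, hzero m hm]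
    set C₁ := pline F (cardPt F i) (cardPt F j) with hC₁
    set C₂ := pline F (cardPt F i) (cardPt F k) with hC₂
    have hC₁C₂ : C₁ ≠ C₂ := by
      intro h
      have hnm : cardPt F j ∉ pline F (Projectivization.mk F (Pi.single i 1)
          (single_nz i)) (cardPt F k) :=
        cardPt_not_mem_pline hjk hji hki
          (by rw [Pi.single_eq_same]; exact one_ne_zero)
          (by rw [← cardPt_eq_mk i]; exact cardPt_ne (Ne.symm hki))
      apply hnm
      rw [← cardPt_eq_mk i, ← hC₂, ← h, hC₁]
      exact right_mem_pline _ _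
    refine ⟨C₁, C₂, isCoastLine_card (fun hh => hji hh.symm) (fun hh => hki hh.symm)
      hjk, isCoastLine_card (fun hh => hki hh.symm) (fun hh => hji hh.symm)
      hjk.symm, hC₁C₂, ?_⟩
    apply windRose_eq
    · intro m
      rcases tri hjk hji hki m with rfl | rfl | rfl
      · rw [hpi]
        intro q hq
        rw [hC₁]
        exact Or.inl hq
      · rw [hpi]
        intro q hq
        rw [hC₂]
        exact Or.inr hq
      · rw [hpi, pline, if_pos rfl]
        intro q hq
        rw [Set.mem_singleton_iff] at hq
        subst hq
        exact Or.inl (left_mem_pline _ _)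
    · have : C₁ = pline F (Projectivization.mk F v hv) (cardPt F j) := by rw [hpi]
      rw [this]; exact pline_subset_windRose _ j
    · have : C₂ = pline F (Projectivization.mk F v hv) (cardPt F k) := by rw [hpi]
      rw [this]; exact pline_subset_windRose _ k
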